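/- Let Q(z) be a formal power series with Q(0)=0, Q'(0)=1 satisfying Q''(z) = Q'(z)(Q(z) + Q'(z)). Then Q'(z) = 2e^{Q(z)} - Q(z) - 1. -/

import Mathlib

/-- Composition `φ(Q)` of formal power series, valid when `Q` has zero
constant coefficient. -/
noncomputable def psComp (φ T : PowerSeries ℝ) : PowerSeries ℝ :=
  PowerSeries.mk fun n =>
    ∑ j ∈ Finset.range (n + 1), (PowerSeries.coeff j φ) * PowerSeries.coeff n (T ^ j)

open PowerSeries Finset
section aux

variable (Q : PowerSeries ℝ)

lemma coeff_pow_zero (h0 : PowerSeries.constantCoeff Q = 0) {m j : ℕ} (h : m < j) : coeff m (Q ^ j) = 0 := by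
  have hx : (X : PowerSeries ℝ) ^ j ∣ Q ^ j := pow_dvd_pow_of_dvd (X_dvd_iff.mpr h0) j
  exact (X_pow_dvd_iff.mp hx) m h

/-- truncated exponential sum -/
noncomputable def SN (N : ℕ) : PowerSeries ℝ :=
  ∑ j ∈ Finset.range N, PowerSeries.C (coeff j (exp ℝ)) * Q ^ j

lemma coeff_SN (N m : ℕ) :
    coeff m (SN Q N) = ∑ j ∈ Finset.range N, coeff j (exp ℝ) * coeff m (Q ^ j) := by
  simp [SN, coeff_C_mul]

lemma coeff_comp_eq_SN (h0 : PowerSeries.constantCoeff Q = 0) {N m : ℕ} (h : m < N) :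
    coeff m (psComp (exp ℝ) Q) = coeff m (SN Q N) := by
  rw [coeff_SN, psComp, coeff_mk]
  apply Finset.sum_subset
  · exact Finset.range_subset_range.mpr h
  · intro j _ hj
    rw [coeff_pow_zero Q h0 (by simpa using hj), mul_zero]

lemma coeff_comp_zero : coeff 0 (psComp (exp ℝ) Q) = 1 := by
  simp [psComp, coeff_mk, PowerSeries.coeff_exp]

end aux

lemma exp_coeff_succ (j : ℕ) :
    coeff (j + 1) (exp ℝ) * ((j : ℝ) + 1) = coeff j (exp ℝ) := by
  rw [PowerSeries.coeff_exp, PowerSeries.coeff_exp]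
  have h1 : (Nat.factorial (j + 1) : ℚ) = ((j : ℚ) + 1) * (Nat.factorial j : ℚ) := by
    rw [Nat.factorial_succ]; push_cast; ring
  have h2 : (Nat.factorial j : ℚ) ≠ 0 := Nat.cast_ne_zero.mpr (Nat.factorial_ne_zero j)
  have h3 : ((j : ℚ) + 1) ≠ 0 := by positivity
  rw [show (algebraMap ℚ ℝ) (1 / (Nat.factorial (j+1) : ℚ)) = ((1 / (Nat.factorial (j+1) : ℚ) : ℚ) : ℝ) from rfl,
    show (algebraMap ℚ ℝ) (1 / (Nat.factorial j : ℚ)) = ((1 / (Nat.factorial j : ℚ) : ℚ) : ℝ) from rfl]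
  rw [show ((j : ℝ) + 1) = (((j : ℚ) + 1 : ℚ) : ℝ) by push_cast; ring, ← Rat.cast_mul]
  congr 1
  rw [h1]
  field_simp

variable (Q : PowerSeries ℝ)

lemma deriv_SN (n : ℕ) :
    PowerSeries.derivative ℝ (SN Q (n + 2)) = SN Q (n + 1) * PowerSeries.derivative ℝ Q := by
  rw [SN, map_sum]
  have key : ∀ j : ℕ, PowerSeries.derivative ℝ (PowerSeries.C (coeff j (exp ℝ)) * Q ^ j)
      = PowerSeries.C (coeff j (exp ℝ)) * ((j : PowerSeries ℝ) * (Q ^ (j - 1) * PowerSeries.derivative ℝ Q)) := by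
    intro j
    rw [Derivation.leibniz, derivative_C, smul_zero, add_zero, Derivation.leibniz_pow,
      smul_eq_mul, smul_eq_mul, nsmul_eq_mul]
  simp only [key]
  rw [Finset.sum_range_succ']
  simp only [Nat.cast_zero, zero_mul, mul_zero, add_zero]
  have key2 : ∀ j : ℕ, PowerSeries.C (coeff (j+1) (exp ℝ)) * (((j:ℕ)+1 : PowerSeries ℝ) * (Q ^ j * PowerSeries.derivative ℝ Q))
      = PowerSeries.C (coeff j (exp ℝ)) * Q ^ j * PowerSeries.derivative ℝ Q := by
    intro j
    have : ((j:ℕ)+1 : PowerSeries ℝ) = PowerSeries.C ((j : ℝ) + 1) := by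
      rw [map_add, map_one, map_natCast]
    rw [this, ← mul_assoc, ← map_mul, exp_coeff_succ, mul_assoc]
  simp only [Nat.add_sub_cancel]
  push_cast
  simp only [key2, SN, Finset.sum_mul, mul_assoc]

lemma coeff_deriv_comp (h0 : PowerSeries.constantCoeff Q = 0) (n : ℕ) :
    coeff n (PowerSeries.derivative ℝ (psComp (exp ℝ) Q))
      = coeff n (psComp (exp ℝ) Q * PowerSeries.derivative ℝ Q) := by
  rw [PowerSeries.coeff_derivative,
    coeff_comp_eq_SN Q h0 (show n + 1 < n + 2 by omega),
    ← PowerSeries.coeff_derivative, deriv_SN, PowerSeries.coeff_mul, PowerSeries.coeff_mul]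
  refine Finset.sum_congr rfl fun p hp => ?_
  rw [coeff_comp_eq_SN Q h0
    (show p.1 < n + 1 from Nat.lt_succ_of_le (Finset.HasAntidiagonal.antidiagonal.fst_le hp))]

/-- If `Q` is a formal power series with `Q(0) = 0`, `Q'(0) = 1` satisfying
`Q'' = Q'(Q + Q')`, then `Q' = 2 e^Q - Q - 1`. -/
theorem unilabelled_bilabelled_first_order_reduction
    (Q : PowerSeries ℝ)
    (h0 : PowerSeries.constantCoeff Q = 0)
    (h1 : PowerSeries.coeff 1 Q = 1)
    (hODE : PowerSeries.derivative ℝ (PowerSeries.derivative ℝ Q)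
      = PowerSeries.derivative ℝ Q * (Q + PowerSeries.derivative ℝ Q)) :
    PowerSeries.derivative ℝ Q = 2 * psComp (PowerSeries.exp ℝ) Q - Q - 1 := by
  set E := psComp (PowerSeries.exp ℝ) Q with hE
  set G : PowerSeries ℝ := 2 * E - Q - 1 with hG
  set D := PowerSeries.derivative ℝ Q with hD
  have key : ∀ n : ℕ, PowerSeries.coeff n (D - G) = 0 := by
    intro n
    induction n using Nat.strong_induction_on with
    | _ n ih =>
      match n with
      | 0 =>
        have hD0 : PowerSeries.coeff 0 D = 1 := by
          rw [hD, PowerSeries.coeff_derivative, h1]; norm_num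
        have hE0 : PowerSeries.coeff 0 E = 1 := coeff_comp_zero Q
        have hQ0 : PowerSeries.coeff 0 Q = 0 := by
          rwa [PowerSeries.coeff_zero_eq_constantCoeff]
        rw [map_sub, hD0, hG, two_mul, map_sub, map_sub, map_add, hE0, hQ0,
          PowerSeries.coeff_zero_one]
        ring
      | (n + 1) =>
        have hmul0 : PowerSeries.coeff n (D * (D - G)) = 0 := by
          rw [PowerSeries.coeff_mul]
          refine Finset.sum_eq_zero fun p hp => ?_
          rw [ih p.2 (Nat.lt_succ_of_le (Finset.HasAntidiagonal.antidiagonal.snd_le hp)), mul_zero]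
        have hcd : ∀ m : ℕ, PowerSeries.coeff m (PowerSeries.derivative ℝ E)
            = PowerSeries.coeff m (E * D) := fun m => coeff_deriv_comp Q h0 m
        have dG : PowerSeries.derivative ℝ G
            = (PowerSeries.derivative ℝ E + PowerSeries.derivative ℝ E) - D := by
          rw [hG, map_sub, map_sub, Derivation.map_one_eq_zero, two_mul, map_add, sub_zero, ← hD]
        have hder : PowerSeries.coeff n (PowerSeries.derivative ℝ (D - G))
            = PowerSeries.coeff n (D * (D - G)) := by
          have expand : D * (D - G) = D * (Q + D) - ((E * D) + (E * D)) + D := by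
            rw [hG]; ring
          rw [map_sub, dG, hODE, expand]
          simp only [map_sub, map_add]
          rw [hcd]
          ring
        have hz : PowerSeries.coeff (n + 1) (D - G) * ((n : ℝ) + 1) = 0 := by
          have hc := PowerSeries.coeff_derivative (D - G) n
          push_cast at hc
          rw [← hc, hder, hmul0]
        exact (mul_eq_zero.mp hz).resolve_right (by positivity)
  ext n
  have := key n
  rw [map_sub, sub_eq_zero] at this
  simpa using this
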